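/- Let F be a finite multiset in ℝ, let [a,b] ⊂ ℝ be a finite interval with a < b, and let ψ : ℝ → [0,∞) be a measurable function whose support is a connected set. If 1_F * ψ =_ae 1_{[a,b]} (i.e. Σ_{f ∈ F, counted with multiplicity} ψ(x − f) = 1_{[a,b]}(x) for Lebesgue-almost every x ∈ ℝ), then there exist a natural number m ≥ 1 and real numbers c < c′ such that m·ψ =_ae 1_{[c,c′]}. -/

import Mathlib

open MeasureTheory Set

private lemma ae_shift {P : ℝ → Prop} (c : ℝ)
    (h : ∀ᵐ x ∂(volume : Measure ℝ), P x) :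
    ∀ᵐ x ∂(volume : Measure ℝ), P (x + c) := by
  rw [MeasureTheory.ae_iff] at h ⊢
  have heq : {x : ℝ | ¬ P (x + c)} = (fun x => x + c) ⁻¹' {x | ¬ P x} := rfl
  rw [heq, measure_preimage_add_right]
  exact h

private lemma ae_exists_mem {P : ℝ → Prop} {s : Set ℝ}
    (hs : volume s ≠ 0) (h : ∀ᵐ x ∂(volume : Measure ℝ), P x) :
    ∃ x ∈ s, P x := by
  by_contra hc
  push_neg at hc
  apply hs
  have hsub : s ⊆ {x | ¬ P x} := fun x hx => hc x hx
  have h0 : volume {x : ℝ | ¬ P x} = 0 := ae_iff.mp h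
  exact le_antisymm (h0 ▸ measure_mono hsub) zero_le

private lemma ae_absurd {P : ℝ → Prop} {s : Set ℝ}
    (hs : volume s ≠ 0) (h : ∀ᵐ x ∂(volume : Measure ℝ), P x)
    (h2 : ∀ x ∈ s, ¬ P x) : False := by
  obtain ⟨x, hx, hPx⟩ := ae_exists_mem hs h
  exact h2 x hx hPx

private lemma sum_decomp (F : Multiset ℝ) (g : ℝ → ℝ) (y : ℝ) :
    (F.map g).sum
      = (F.count y) • g y + ((F.filter (fun a => ¬ a = y)).map g).sum := by
  classical
  conv_lhs => rw [← Multiset.filter_add_not (fun a => a = y) F]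
  rw [Multiset.map_add, Multiset.sum_add, Multiset.filter_eq', Multiset.map_replicate,
    Multiset.sum_replicate]

/-- **Connected tilings of intervals.**  Let `F` be a finite multiset in `ℝ`, let `[a,b]` be a
nondegenerate interval, and let `ψ : ℝ → [0,∞)` be measurable with connected support.  If
`1_F * ψ =_ae 1_{[a,b]}`, i.e. `∑_{f ∈ F} ψ(x - f) = 1_{[a,b]}(x)` for a.e. `x` (with `f`
counted with multiplicity), then `m • ψ =_ae 1_{[c,c']}` for some natural number `m ≥ 1` and
some `c < c'`. -/
theorem connected_tiling_of_interval (F : Multiset ℝ) (a b : ℝ) (hab : a < b)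
    (ψ : ℝ → ℝ) (hmeas : Measurable ψ) (hpos : ∀ x, 0 ≤ ψ x)
    (hconn : IsPreconnected (Function.support ψ))
    (htile : ∀ᵐ x ∂(volume : Measure ℝ),
      (F.map (fun f => ψ (x - f))).sum
        = Set.indicator (Set.Icc a b) (fun _ => (1 : ℝ)) x) :
    ∃ m : ℕ, 1 ≤ m ∧ ∃ c c' : ℝ, c < c' ∧
      ∀ᵐ x ∂(volume : Measure ℝ),
        (m : ℝ) * ψ x = Set.indicator (Set.Icc c c') (fun _ => (1 : ℝ)) x := by
  classical
  set S := Function.support ψ with hSdef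
  have hOrd : S.OrdConnected := hconn.ordConnected
  -- nonnegativity of mapped sums
  have hmapnn : ∀ (G : Multiset ℝ) (x : ℝ), ∀ y ∈ (G.map (fun f => ψ (x - f))), (0:ℝ) ≤ y := by
    intro G x y hy
    obtain ⟨f, _, rfl⟩ := Multiset.mem_map.mp hy
    exact hpos _
  have hIooab : volume (Ioo a b) ≠ 0 := by
    rw [Real.volume_Ioo]
    exact (ENNReal.ofReal_pos.mpr (by linarith)).ne'
  -- F is nonempty
  have hFne : F ≠ 0 := by
    intro h0
    apply ae_absurd hIooab htile
    intro x hx hP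
    rw [h0] at hP
    simp only [Multiset.map_zero, Multiset.sum_zero] at hP
    rw [indicator_of_mem (mem_Icc.mpr ⟨hx.1.le, hx.2.le⟩)] at hP
    exact one_ne_zero hP.symm
  obtain ⟨f₀, hf₀⟩ := Multiset.exists_mem_of_ne_zero hFne
  -- ψ vanishes a.e. off a compact interval (translated)
  have hout0 : ∀ᵐ x ∂(volume : Measure ℝ), x ∉ Icc a b → ψ (x - f₀) = 0 := by
    filter_upwards [htile] with x hP hxmem
    have hle : ψ (x - f₀) ≤ (F.map (fun f => ψ (x - f))).sum :=
      Multiset.single_le_sum (hmapnn F x) _ (Multiset.mem_map_of_mem _ hf₀)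
    rw [hP, indicator_of_notMem hxmem] at hle
    exact le_antisymm hle (hpos _)
  have hS_in : ∀ᵐ t ∂(volume : Measure ℝ), t ∈ S → t ∈ Icc (a - f₀) (b - f₀) := by
    have h1 := ae_shift f₀ hout0
    filter_upwards [h1] with t ht htS
    by_contra hnot
    have h3 : t + f₀ ∉ Icc a b := by
      simp only [mem_Icc] at hnot ⊢
      intro ⟨h4, h5⟩
      exact hnot ⟨by linarith, by linarith⟩
    have h4 := ht h3
    rw [add_sub_cancel_right] at h4
    exact htS h4
  -- ψ is not a.e. zero
  have hvolS : volume S ≠ 0 := by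
    intro h0
    have hae0 : ∀ᵐ x ∂(volume : Measure ℝ), ψ x = 0 := by
      rw [MeasureTheory.ae_iff]
      exact h0
    have hf0 : ∀ f ∈ (↑F.toFinset : Set ℝ), ∀ᵐ x ∂(volume : Measure ℝ), ψ (x - f) = 0 := by
      intro f _
      have := ae_shift (-f) hae0
      simpa [sub_eq_add_neg] using this
    have hall : ∀ᵐ x ∂(volume : Measure ℝ), ∀ f ∈ (↑F.toFinset : Set ℝ), ψ (x - f) = 0 :=
      (MeasureTheory.ae_ball_iff (F.toFinset.countable_toSet)).mpr hf0
    apply ae_absurd hIooab (htile.and hall)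
    intro x hx ⟨h1, h2⟩
    have hsum : (F.map (fun f => ψ (x - f))).sum = 0 := by
      apply Multiset.sum_eq_zero
      intro y hy
      obtain ⟨f, hf, rfl⟩ := Multiset.mem_map.mp hy
      exact h2 f (by simpa using Multiset.mem_toFinset.mpr hf)
    rw [hsum, indicator_of_mem (mem_Icc.mpr ⟨hx.1.le, hx.2.le⟩)] at h1
    exact one_ne_zero h1.symm
  have hSne : S.Nonempty := nonempty_of_measure_ne_zero hvolS
  -- boundedness of the support
  have hbddA : BddAbove S := by
    by_contra hb
    rw [not_bddAbove_iff] at hb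
    obtain ⟨s₁, hs₁S, hs₁⟩ := hb (b - f₀)
    obtain ⟨s₂, hs₂S, hs₂⟩ := hb s₁
    have hsub : Ioo s₁ s₂ ⊆ S := fun x hx => hOrd.out hs₁S hs₂S ⟨hx.1.le, hx.2.le⟩
    refine ae_absurd (s := Ioo s₁ s₂) ?_ hS_in ?_
    · rw [Real.volume_Ioo]
      exact (ENNReal.ofReal_pos.mpr (by linarith)).ne'
    · intro x hx hP
      have h4 := (hP (hsub hx)).2
      have h5 := hx.1
      linarith
  have hbddB : BddBelow S := by
    by_contra hb
    rw [not_bddBelow_iff] at hb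
    obtain ⟨s₁, hs₁S, hs₁⟩ := hb (a - f₀)
    obtain ⟨s₂, hs₂S, hs₂⟩ := hb s₁
    have hsub : Ioo s₂ s₁ ⊆ S := fun x hx => hOrd.out hs₂S hs₁S ⟨hx.1.le, hx.2.le⟩
    refine ae_absurd (s := Ioo s₂ s₁) ?_ hS_in ?_
    · rw [Real.volume_Ioo]
      exact (ENNReal.ofReal_pos.mpr (by linarith)).ne'
    · intro x hx hP
      have h4 := (hP (hsub hx)).1
      have h5 := hx.2
      linarith
  set α := sInf S with hαdef
  set β := sSup S with hβdef
  have hsubIcc : S ⊆ Icc α β := fun s hs => ⟨csInf_le hbddB hs, le_csSup hbddA hs⟩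
  have hαβ : α < β := by
    by_contra hcon
    push_neg at hcon
    apply hvolS
    refine le_antisymm ?_ zero_le
    calc volume S ≤ volume (Icc α β) := measure_mono hsubIcc
    _ = 0 := by rw [Real.volume_Icc]; exact ENNReal.ofReal_eq_zero.mpr (by linarith)
  have hIooS : Ioo α β ⊆ S := by
    intro x hx
    obtain ⟨s₁, hs₁S, hs₁⟩ := exists_lt_of_csInf_lt hSne hx.1
    obtain ⟨s₂, hs₂S, hs₂⟩ := exists_lt_of_lt_csSup hSne hx.2
    exact hOrd.out hs₁S hs₂S ⟨hs₁.le, hs₂.le⟩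
  have houtIcc : ∀ t, t ∉ Icc α β → ψ t = 0 := by
    intro t ht
    by_contra h
    exact ht (hsubIcc h)
  have hψpos : ∀ t ∈ Ioo α β, 0 < ψ t := by
    intro t ht
    exact (hpos t).lt_of_ne (Ne.symm (hIooS ht))
  -- extremes of F
  have hFsne : F.toFinset.Nonempty := by rwa [Multiset.toFinset_nonempty]
  set f₁ := F.toFinset.min' hFsne with hf₁def
  set fN := F.toFinset.max' hFsne with hfNdef
  have hf₁F : f₁ ∈ F := Multiset.mem_toFinset.mp (F.toFinset.min'_mem hFsne)
  have hfNF : fN ∈ F := Multiset.mem_toFinset.mp (F.toFinset.max'_mem hFsne)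
  have hminle : ∀ f ∈ F, f₁ ≤ f := fun f hf => F.toFinset.min'_le f (Multiset.mem_toFinset.mpr hf)
  have hmaxle : ∀ f ∈ F, f ≤ fN := fun f hf => F.toFinset.le_max' f (Multiset.mem_toFinset.mpr hf)
  set m := F.count f₁ with hmdef
  set mN := F.count fN with hmNdef
  have hm : 0 < m := Multiset.count_pos.mpr hf₁F
  have hmN : 0 < mN := Multiset.count_pos.mpr hfNF
  have hmR : (0:ℝ) < m := by exact_mod_cast hm
  have hmNR : (0:ℝ) < mN := by exact_mod_cast hmN
  -- each translate block sits inside [a,b]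
  have hsub : ∀ f ∈ F, Ioo (f + α) (f + β) ⊆ Icc a b := by
    intro f hf x hx
    by_contra hxn
    have hU : IsOpen (Ioo (f + α) (f + β) ∩ (Icc a b)ᶜ) :=
      isOpen_Ioo.inter isClosed_Icc.isOpen_compl
    have hvolU : volume (Ioo (f + α) (f + β) ∩ (Icc a b)ᶜ) ≠ 0 :=
      (hU.measure_pos volume ⟨x, hx, hxn⟩).ne'
    apply ae_absurd hvolU htile
    intro y hy hP
    have h1 : ψ (y - f) ≤ (F.map (fun f => ψ (y - f))).sum :=
      Multiset.single_le_sum (hmapnn F y) _ (Multiset.mem_map_of_mem _ hf)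
    have hy1 := hy.1
    simp only [mem_Ioo] at hy1
    have h2 : 0 < ψ (y - f) := hψpos _ ⟨by linarith [hy1.1], by linarith [hy1.2]⟩
    rw [hP, indicator_of_notMem hy.2] at h1
    linarith
  have haf : ∀ f ∈ F, a ≤ f + α ∧ f + β ≤ b := by
    intro f hf
    constructor
    · by_contra hcon
      push_neg at hcon
      obtain ⟨z, hz1, hz2⟩ := exists_between (show f + α < min a (f + β) by
        rw [lt_min_iff]; exact ⟨hcon, by linarith⟩)
      have hz3 : z ∈ Ioo (f + α) (f + β) := ⟨hz1, lt_of_lt_of_le hz2 (min_le_right _ _)⟩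
      have h4 := (hsub f hf hz3).1
      have h5 : z < a := lt_of_lt_of_le hz2 (min_le_left _ _)
      linarith
    · by_contra hcon
      push_neg at hcon
      obtain ⟨z, hz1, hz2⟩ := exists_between (show max b (f + α) < f + β by
        rw [max_lt_iff]; exact ⟨hcon, by linarith⟩)
      have hz3 : z ∈ Ioo (f + α) (f + β) := ⟨lt_of_le_of_lt (le_max_right _ _) hz1, hz2⟩
      have h4 := (hsub f hf hz3).2
      have h5 : b < z := lt_of_le_of_lt (le_max_left _ _) hz1
      linarith
  -- a.e. bound ψ ≤ 1/m and ψ ≤ 1/mN on (α,β)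
  have hboundgen : ∀ (f : ℝ), f ∈ F →
      ∀ᵐ t ∂(volume : Measure ℝ), t ∈ Ioo α β → ψ t ≤ 1 / (F.count f : ℝ) := by
    intro f hf
    have hb1 : ∀ᵐ x ∂(volume : Measure ℝ),
        x ∈ Ioo (f + α) (f + β) → ((F.count f : ℝ)) * ψ (x - f) ≤ 1 := by
      filter_upwards [htile] with x hx hmem
      rw [sum_decomp F (fun f => ψ (x - f)) f] at hx
      have hrest : (0:ℝ) ≤ ((F.filter (fun a => ¬ a = f)).map (fun f => ψ (x - f))).sum :=
        Multiset.sum_nonneg (hmapnn _ x)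
      rw [indicator_of_mem (hsub f hf hmem)] at hx
      have hns : (F.count f) • ψ (x - f) = ((F.count f : ℝ)) * ψ (x - f) := nsmul_eq_mul _ _
      rw [hns] at hx
      linarith
    have hb2 := ae_shift f hb1
    filter_upwards [hb2] with t ht htI
    have h3 : t + f ∈ Ioo (f + α) (f + β) := by
      simp only [mem_Ioo] at htI ⊢
      constructor <;> linarith [htI.1, htI.2]
    have h4 := ht h3
    rw [add_sub_cancel_right] at h4
    have hcpos : (0:ℝ) < (F.count f : ℝ) := by
      exact_mod_cast Multiset.count_pos.mpr hf
    rw [le_div_iff₀ hcpos]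
    linarith
  have hbound := hboundgen f₁ hf₁F
  have hboundN := hboundgen fN hfNF
  -- near-edge identities
  set GN := F.toFinset.erase fN with hGNdef
  set δR : ℝ := if h : GN.Nonempty then min (β - α) (fN - GN.max' h) else β - α with hδRdef
  have hδRpos : 0 < δR := by
    rw [hδRdef]
    split_ifs with h
    · refine lt_min (by linarith) ?_
      have hlt : GN.max' h < fN := by
        rw [Finset.max'_lt_iff]
        intro y hy
        obtain ⟨hne, hymem⟩ := Finset.mem_erase.mp hy
        exact lt_of_le_of_ne (hmaxle y (Multiset.mem_toFinset.mp hymem)) hne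
      linarith
    · linarith
  have hδRle : δR ≤ β - α := by
    rw [hδRdef]; split_ifs
    exacts [min_le_left _ _, le_refl _]
  have hδRgap : ∀ f ∈ F, f ≠ fN → f ≤ fN - δR := by
    intro f hf hne
    have hfG : f ∈ GN := Finset.mem_erase.mpr ⟨hne, Multiset.mem_toFinset.mpr hf⟩
    rw [hδRdef, dif_pos ⟨f, hfG⟩]
    have h1 : f ≤ GN.max' ⟨f, hfG⟩ := Finset.le_max' _ _ hfG
    have h2 : min (β - α) (fN - GN.max' ⟨f, hfG⟩) ≤ fN - GN.max' ⟨f, hfG⟩ := min_le_right _ _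
    linarith
  set G1 := F.toFinset.erase f₁ with hG1def
  set δL : ℝ := if h : G1.Nonempty then min (β - α) (G1.min' h - f₁) else β - α with hδLdef
  have hδLpos : 0 < δL := by
    rw [hδLdef]
    split_ifs with h
    · refine lt_min (by linarith) ?_
      have hlt : f₁ < G1.min' h := by
        rw [Finset.lt_min'_iff]
        intro y hy
        obtain ⟨hne, hymem⟩ := Finset.mem_erase.mp hy
        exact lt_of_le_of_ne (hminle y (Multiset.mem_toFinset.mp hymem)) (Ne.symm hne)
      linarith
    · linarith
  have hδLle : δL ≤ β - α := by
    rw [hδLdef]; split_ifs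
    exacts [min_le_left _ _, le_refl _]
  have hδLgap : ∀ f ∈ F, f ≠ f₁ → f₁ + δL ≤ f := by
    intro f hf hne
    have hfG : f ∈ G1 := Finset.mem_erase.mpr ⟨hne, Multiset.mem_toFinset.mpr hf⟩
    rw [hδLdef, dif_pos ⟨f, hfG⟩]
    have h1 : G1.min' ⟨f, hfG⟩ ≤ f := Finset.min'_le _ _ hfG
    have h2 : min (β - α) (G1.min' ⟨f, hfG⟩ - f₁) ≤ G1.min' ⟨f, hfG⟩ - f₁ := min_le_right _ _
    linarith
  have hnear_right : ∀ᵐ t ∂(volume : Measure ℝ),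
      t ∈ Ioo (β - δR) β → (mN : ℝ) * ψ t = 1 := by
    have h1 : ∀ᵐ x ∂(volume : Measure ℝ),
        x ∈ Ioo (fN + β - δR) (fN + β) → (mN : ℝ) * ψ (x - fN) = 1 := by
      filter_upwards [htile] with x hx hmem
      simp only [mem_Ioo] at hmem
      obtain ⟨ha1, ha2⟩ := haf fN hfNF
      have hmemIcc : x ∈ Icc a b := ⟨by linarith, by linarith⟩
      rw [sum_decomp F (fun f => ψ (x - f)) fN, indicator_of_mem hmemIcc] at hx
      have hrest0 : ((F.filter (fun a => ¬ a = fN)).map (fun f => ψ (x - f))).sum = 0 := by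
        apply Multiset.sum_eq_zero
        intro y hy
        obtain ⟨f, hfmem, rfl⟩ := Multiset.mem_map.mp hy
        obtain ⟨hfF, hfne⟩ := Multiset.mem_filter.mp hfmem
        have hle := hδRgap f hfF hfne
        apply houtIcc
        intro hmem2
        have := hmem2.2
        simp only [mem_Icc] at hmem2
        linarith [hmem2.2]
      rw [hrest0, add_zero] at hx
      rw [← hx, nsmul_eq_mul]
    have h2 := ae_shift fN h1
    filter_upwards [h2] with t ht htI
    simp only [mem_Ioo] at htI
    have h3 : t + fN ∈ Ioo (fN + β - δR) (fN + β) := by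
      simp only [mem_Ioo]
      constructor <;> linarith
    have h4 := ht h3
    rwa [add_sub_cancel_right] at h4
  have hnear_left : ∀ᵐ t ∂(volume : Measure ℝ),
      t ∈ Ioo α (α + δL) → (m : ℝ) * ψ t = 1 := by
    have h1 : ∀ᵐ x ∂(volume : Measure ℝ),
        x ∈ Ioo (f₁ + α) (f₁ + α + δL) → (m : ℝ) * ψ (x - f₁) = 1 := by
      filter_upwards [htile] with x hx hmem
      simp only [mem_Ioo] at hmem
      obtain ⟨ha1, ha2⟩ := haf f₁ hf₁F
      have hmemIcc : x ∈ Icc a b := ⟨by linarith, by linarith⟩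
      rw [sum_decomp F (fun f => ψ (x - f)) f₁, indicator_of_mem hmemIcc] at hx
      have hrest0 : ((F.filter (fun a => ¬ a = f₁)).map (fun f => ψ (x - f))).sum = 0 := by
        apply Multiset.sum_eq_zero
        intro y hy
        obtain ⟨f, hfmem, rfl⟩ := Multiset.mem_map.mp hy
        obtain ⟨hfF, hfne⟩ := Multiset.mem_filter.mp hfmem
        have hle := hδLgap f hfF hfne
        apply houtIcc
        intro hmem2
        simp only [mem_Icc] at hmem2
        linarith [hmem2.1]
      rw [hrest0, add_zero] at hx
      rw [← hx, nsmul_eq_mul]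
    have h2 := ae_shift f₁ h1
    filter_upwards [h2] with t ht htI
    simp only [mem_Ioo] at htI
    have h3 : t + f₁ ∈ Ioo (f₁ + α) (f₁ + α + δL) := by
      simp only [mem_Ioo]
      constructor <;> linarith
    have h4 := ht h3
    rwa [add_sub_cancel_right] at h4
  -- m = mN
  have hmmN : m = mN := by
    have hle1 : m ≤ mN := by
      obtain ⟨t, htmem, h1, h2⟩ := ae_exists_mem (s := Ioo (max α (β - δR)) β)
        (by rw [Real.volume_Ioo]
            refine (ENNReal.ofReal_pos.mpr ?_).ne'
            have h5 : max α (β - δR) < β := max_lt hαβ (by linarith)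
            linarith)
        (hnear_right.and hbound)
      simp only [mem_Ioo] at htmem
      have e1 : (mN : ℝ) * ψ t = 1 := h1 ⟨lt_of_le_of_lt (le_max_right _ _) htmem.1, htmem.2⟩
      have e2 : ψ t ≤ 1 / m := h2 ⟨lt_of_le_of_lt (le_max_left _ _) htmem.1, htmem.2⟩
      have e3 : ψ t = 1 / mN := by field_simp at e1 ⊢; linarith
      have e4 : (m:ℝ) ≤ mN := by
        rw [e3, div_le_div_iff₀ hmNR hmR] at e2
        linarith
      exact_mod_cast e4
    have hle2 : mN ≤ m := by
      obtain ⟨t, htmem, h1, h2⟩ := ae_exists_mem (s := Ioo α (min β (α + δL)))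
        (by rw [Real.volume_Ioo]
            refine (ENNReal.ofReal_pos.mpr ?_).ne'
            have h5 : α < min β (α + δL) := lt_min hαβ (by linarith)
            linarith)
        (hnear_left.and hboundN)
      simp only [mem_Ioo] at htmem
      have e1 : (m : ℝ) * ψ t = 1 := h1 ⟨htmem.1, lt_of_lt_of_le htmem.2 (min_le_right _ _)⟩
      have e2 : ψ t ≤ 1 / mN := h2 ⟨htmem.1, lt_of_lt_of_le htmem.2 (min_le_left _ _)⟩
      have e3 : ψ t = 1 / m := by field_simp at e1 ⊢; linarith
      have e4 : (mN:ℝ) ≤ m := by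
        rw [e3, div_le_div_iff₀ hmR hmNR] at e2
        linarith
      exact_mod_cast e4
    exact le_antisymm hle1 hle2
  -- no elements of F strictly between f₁ and f₁ + (β - α)
  have hgap : ∀ f ∈ F, f ≠ f₁ → f₁ + (β - α) ≤ f := by
    intro f hf hne
    by_contra hcon
    push_neg at hcon
    have hff1 : f₁ < f := lt_of_le_of_ne (hminle f hf) (Ne.symm hne)
    have hJvol : volume (Ioo (max (f + α) (f₁ + β - δR)) (f₁ + β)) ≠ 0 := by
      rw [Real.volume_Ioo]
      refine (ENNReal.ofReal_pos.mpr ?_).ne'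
      have h5 : max (f + α) (f₁ + β - δR) < f₁ + β :=
        max_lt (by linarith) (by linarith)
      linarith
    have h5 : ∀ᵐ x ∂(volume : Measure ℝ),
        x - f₁ ∈ Ioo (β - δR) β → (mN : ℝ) * ψ (x - f₁) = 1 := by
      have h6 := ae_shift (-f₁) hnear_right
      simpa [sub_eq_add_neg] using h6
    apply ae_absurd hJvol (htile.and h5)
    intro x hxJ hP
    obtain ⟨h1, h2⟩ := hP
    simp only [mem_Ioo, max_lt_iff] at hxJ
    obtain ⟨⟨hxa, hxb⟩, hxc⟩ := hxJ
    have h6 : (mN : ℝ) * ψ (x - f₁) = 1 := by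
      apply h2
      simp only [mem_Ioo]
      constructor <;> linarith
    have hmemIcc : x ∈ Icc a b :=
      ⟨by linarith [(haf f hf).1], by linarith [(haf f₁ hf₁F).2]⟩
    rw [sum_decomp F (fun f => ψ (x - f)) f₁, indicator_of_mem hmemIcc, nsmul_eq_mul] at h1
    have h7 : ψ (x - f) ≤ ((F.filter (fun a => ¬ a = f₁)).map (fun f => ψ (x - f))).sum :=
      Multiset.single_le_sum (hmapnn _ x) _
        (Multiset.mem_map_of_mem _ (Multiset.mem_filter.mpr ⟨hf, hne⟩))
    have h8 : 0 < ψ (x - f) := hψpos _ ⟨by linarith, by linarith⟩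
    have h9 : ((m : ℝ)) = (mN : ℝ) := by exact_mod_cast hmmN
    rw [h9] at h1
    linarith
  -- main identity on the support
  have hmid : ∀ᵐ t ∂(volume : Measure ℝ), t ∈ Ioo α β → (m : ℝ) * ψ t = 1 := by
    have h1 : ∀ᵐ x ∂(volume : Measure ℝ),
        x ∈ Ioo (f₁ + α) (f₁ + β) → (m : ℝ) * ψ (x - f₁) = 1 := by
      filter_upwards [htile] with x hx hmem
      have hmem' := hmem
      simp only [mem_Ioo] at hmem'
      rw [sum_decomp F (fun f => ψ (x - f)) f₁, indicator_of_mem (hsub f₁ hf₁F hmem)] at hx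
      have hrest0 : ((F.filter (fun a => ¬ a = f₁)).map (fun f => ψ (x - f))).sum = 0 := by
        apply Multiset.sum_eq_zero
        intro y hy
        obtain ⟨f, hfmem, rfl⟩ := Multiset.mem_map.mp hy
        obtain ⟨hfF, hfne⟩ := Multiset.mem_filter.mp hfmem
        have hle := hgap f hfF hfne
        apply houtIcc
        intro hmem2
        simp only [mem_Icc] at hmem2
        linarith [hmem2.1]
      rw [hrest0, add_zero] at hx
      rw [← hx, nsmul_eq_mul]
    have h2 := ae_shift f₁ h1
    filter_upwards [h2] with t ht htI
    simp only [mem_Ioo] at htI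
    have h3 : t + f₁ ∈ Ioo (f₁ + α) (f₁ + β) := by
      simp only [mem_Ioo]
      constructor <;> linarith
    have h4 := ht h3
    rwa [add_sub_cancel_right] at h4
  -- conclusion
  refine ⟨m, hm, α, β, hαβ, ?_⟩
  have hbdry1 : ∀ᵐ x ∂(volume : Measure ℝ), x ∉ ({α} : Set ℝ) :=
    measure_eq_zero_iff_ae_notMem.mp Real.volume_singleton
  have hbdry2 : ∀ᵐ x ∂(volume : Measure ℝ), x ∉ ({β} : Set ℝ) :=
    measure_eq_zero_iff_ae_notMem.mp Real.volume_singleton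
  filter_upwards [hmid, hbdry1, hbdry2] with x h1 h2 h3
  simp only [mem_singleton_iff] at h2 h3
  by_cases hx : x ∈ Icc α β
  · have hIoo : x ∈ Ioo α β := ⟨lt_of_le_of_ne hx.1 (Ne.symm h2), lt_of_le_of_ne hx.2 h3⟩
    rw [indicator_of_mem hx]
    exact h1 hIoo
  · rw [indicator_of_notMem hx, houtIcc x hx, mul_zero]
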